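/- arXiv:2009.13671 — 2 statements merged into one kernel-verified Lean document; each statement's English description precedes it below -/
import Mathlib

section
/- Define the sequence (p_n)_{n≥1} by p_n = 1/√k if n = 3^k or n = 3^k + 1 for some integer k ≥ 1, and p_n = 0 otherwise. Then ∑_{n=1}^∞ p_n p_{n+1} = ∞; in particular there exists N ≥ 1 with ∑_{n=1}^∞ p_n p_{n+N} = ∞. -/
open Filter

/-- The sequence `(pₙ)_{n≥1}` of the final Remark: `pₙ = 1/√k` if `n = 3^k` or
`n = 3^k + 1` for some integer `k ≥ 1`, and `pₙ = 0` otherwise. -/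
def IsRemarkSeq (p : ℕ → ℝ) : Prop :=
  (∀ n k : ℕ, 1 ≤ k → (n = 3 ^ k ∨ n = 3 ^ k + 1) → p n = 1 / Real.sqrt k) ∧
    ∀ n : ℕ, 1 ≤ n → (∀ k : ℕ, 1 ≤ k → n ≠ 3 ^ k ∧ n ≠ 3 ^ k + 1) → p n = 0

/-- For the Remark sequence, `∑ₙ pₙ pₙ₊₁ = ∞`; in particular there exists `N ≥ 1`
with `∑ₙ pₙ pₙ₊ₙ = ∞`. -/
theorem remark_sequence_satisfies_a
    (p : ℕ → ℝ) (hp : IsRemarkSeq p) :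
    (∑' n : ℕ, ENNReal.ofReal (p (n + 1)) * ENNReal.ofReal (p (n + 2)) = ⊤) ∧
      ∃ N : ℕ, 1 ≤ N ∧
        ∑' n : ℕ, ENNReal.ofReal (p (n + 1)) * ENNReal.ofReal (p (n + 1 + N)) = ⊤ := by
  set g : ℕ → ENNReal := fun n => ENNReal.ofReal (p (n + 1)) * ENNReal.ofReal (p (n + 2))
    with hg
  have hpow : ∀ k : ℕ, 1 ≤ 3 ^ (k + 1) := fun k => Nat.one_le_pow _ _ (by norm_num)
  have hf : Function.Injective (fun k : ℕ => 3 ^ (k + 1) - 1) := by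
    intro a b hab
    simp only at hab
    have h : (3:ℕ) ^ (a+1) = 3 ^ (b+1) := by
      have ha := hpow a; have hb := hpow b; omega
    have := Nat.pow_right_injective (by norm_num : 2 ≤ 3) h
    omega
  have hval : ∀ k : ℕ, g (3 ^ (k + 1) - 1) = ENNReal.ofReal (1 / ((k:ℝ) + 1)) := by
    intro k
    have h1 : 3 ^ (k + 1) - 1 + 1 = 3 ^ (k + 1) := Nat.sub_add_cancel (hpow k)
    have h2 : 3 ^ (k + 1) - 1 + 2 = 3 ^ (k + 1) + 1 := by have := hpow k; omega
    have e1 : p (3 ^ (k + 1)) = 1 / Real.sqrt (k + 1) := by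
      have := hp.1 (3 ^ (k + 1)) (k + 1) (Nat.le_add_left 1 k) (Or.inl rfl)
      simpa using this
    have e2 : p (3 ^ (k + 1) + 1) = 1 / Real.sqrt (k + 1) := by
      have := hp.1 (3 ^ (k + 1) + 1) (k + 1) (Nat.le_add_left 1 k) (Or.inr rfl)
      simpa using this
    have hs : (0:ℝ) ≤ (k:ℝ) + 1 := by positivity
    rw [hg]
    simp only [h1, h2, e1, e2]
    rw [← ENNReal.ofReal_mul (by positivity)]
    congr 1
    rw [div_mul_div_comm, one_mul, Real.mul_self_sqrt hs]
  have hdiv : ∑' k : ℕ, ENNReal.ofReal (1 / ((k:ℝ) + 1)) = ⊤ := by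
    by_contra h
    have hsum : Summable fun k : ℕ => (ENNReal.ofReal (1 / ((k:ℝ) + 1))).toReal :=
      ENNReal.summable_toReal h
    have : Summable fun k : ℕ => 1 / ((k:ℝ) + 1) := by
      refine hsum.congr fun k => ?_
      rw [ENNReal.toReal_ofReal (by positivity)]
    have h2 : Summable fun k : ℕ => 1 / ((k:ℝ)) := by
      rw [← summable_nat_add_iff 1]
      exact this.congr fun k => by push_cast; ring_nf
    exact Real.not_summable_one_div_natCast h2
  have key : ∑' n : ℕ, g n = ⊤ := by
    have hle : ∑' k : ℕ, g (3 ^ (k + 1) - 1) ≤ ∑' n : ℕ, g n :=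
      ENNReal.tsum_comp_le_tsum_of_injective hf g
    rw [tsum_congr hval, hdiv] at hle
    exact top_le_iff.mp hle
  exact ⟨key, 1, le_refl 1, by simpa using key⟩
end

section
/- Define the sequence (p_n)_{n≥1} by p_n = 1/√k if n = 3^k or n = 3^k + 1 for some integer k ≥ 1, and p_n = 0 otherwise. Then limsup_{N→∞} ∑_{n=1}^∞ p_n p_{n+N} = 0; that is, the sums ∑_{n=1}^∞ p_n p_{n+N} converge to 0 as N → ∞. -/
open Filter

/-- Asymmetric auxiliary lemma: two "power gap ≈ N" representations force
the larger exponents to coincide. -/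
lemma remark_aux_pow {N j k j' k' : ℕ} (_hj : 1 ≤ j) (hj' : 1 ≤ j')
    (hjk : j < k) (h2 : 3 ^ k ≤ 3 ^ j + N + 1) (h1' : 3 ^ j' + N ≤ 3 ^ k' + 1)
    (hlt : k' < k) : False := by
  have hk1 : (3 : ℕ) ^ k' ≤ 3 ^ (k - 1) := Nat.pow_le_pow_right (by norm_num) (by omega)
  have hjk1 : (3 : ℕ) ^ j ≤ 3 ^ (k - 1) := Nat.pow_le_pow_right (by norm_num) (by omega)
  have hkeq : (3 : ℕ) ^ k = 3 * 3 ^ (k - 1) := by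
    rw [← pow_succ']
    congr 1
    omega
  have hj'3 : (3 : ℕ) ≤ 3 ^ j' := by
    calc (3 : ℕ) = 3 ^ 1 := by norm_num
    _ ≤ 3 ^ j' := Nat.pow_le_pow_right (by norm_num) hj'
  omega

/-- Uniqueness of the larger exponent in a representation `3^k + δ' = 3^j + δ + N`. -/
lemma remark_pow_uniq {N j k j' k' : ℕ} (hj : 1 ≤ j) (hj' : 1 ≤ j') (hN : 2 ≤ N)
    (h1 : 3 ^ j + N ≤ 3 ^ k + 1) (h2 : 3 ^ k ≤ 3 ^ j + N + 1)
    (h1' : 3 ^ j' + N ≤ 3 ^ k' + 1) (h2' : 3 ^ k' ≤ 3 ^ j' + N + 1) : k = k' := by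
  have hjk : j < k := by
    have : (3 : ℕ) ^ j < 3 ^ k := by omega
    exact (Nat.pow_lt_pow_iff_right (by norm_num)).1 this
  have hjk' : j' < k' := by
    have : (3 : ℕ) ^ j' < 3 ^ k' := by omega
    exact (Nat.pow_lt_pow_iff_right (by norm_num)).1 this
  rcases lt_trichotomy k k' with h | h | h
  · exact absurd h (by intro h'; exact remark_aux_pow hj' hj hjk' h2' h1 h')
  · exact h
  · exact absurd h (by intro h'; exact remark_aux_pow hj hj' hjk h2 h1' h')

/-- If `p m ≠ 0` then `m` is a support point. -/
lemma remark_rep {p : ℕ → ℝ} (hp : IsRemarkSeq p) {m : ℕ} (hm : 1 ≤ m) (h : p m ≠ 0) :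
    ∃ k : ℕ, 1 ≤ k ∧ (m = 3 ^ k ∨ m = 3 ^ k + 1) ∧ p m = 1 / Real.sqrt (k : ℝ) := by
  by_cases hrep : ∃ k, 1 ≤ k ∧ (m = 3 ^ k ∨ m = 3 ^ k + 1)
  · obtain ⟨k, hk, hmk⟩ := hrep
    exact ⟨k, hk, hmk, hp.1 m k hk hmk⟩
  · push_neg at hrep
    exact absurd (hp.2 m hm fun k hk => hrep k hk) h

lemma remark_le_one {p : ℕ → ℝ} (hp : IsRemarkSeq p) {m : ℕ} (hm : 1 ≤ m) : p m ≤ 1 := by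
  by_cases h : p m = 0
  · simp [h]
  · obtain ⟨k, hk, _, hpk⟩ := remark_rep hp hm h
    rw [hpk]
    have h1 : (1 : ℝ) ≤ Real.sqrt k := by
      rw [show (1 : ℝ) = Real.sqrt 1 by simp]
      exact Real.sqrt_le_sqrt (by exact_mod_cast hk)
    rw [div_le_one (by linarith)]
    exact h1

lemma remark_bound {p : ℕ → ℝ} (hp : IsRemarkSeq p) {K m : ℕ} (hK : 1 ≤ K)
    (hm : 3 ^ K + 2 ≤ m) : p m ≤ 1 / Real.sqrt K := by
  have hKpos : (0 : ℝ) < Real.sqrt K := Real.sqrt_pos.2 (by exact_mod_cast hK)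
  have h0 := Nat.one_le_pow K 3 (by norm_num)
  by_cases h : p m = 0
  · rw [h]; positivity
  · obtain ⟨k, hk, hmk, hpk⟩ := remark_rep hp (by omega) h
    have hKk : K ≤ k := by
      have h3 : (3 : ℕ) ^ K < 3 ^ k := by rcases hmk with h' | h' <;> omega
      exact le_of_lt ((Nat.pow_lt_pow_iff_right (by norm_num)).1 h3)
    rw [hpk]
    apply one_div_le_one_div_of_le hKpos
    exact Real.sqrt_le_sqrt (by exact_mod_cast hKk)

/-- For the Remark sequence, `limsup_{N→∞} ∑ₙ pₙ pₙ₊ₙ = 0`; indeed the sums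
`∑ₙ pₙ pₙ₊ₙ` converge to `0` as `N → ∞`. -/
theorem remark_sequence_fails_b
    (p : ℕ → ℝ) (hp : IsRemarkSeq p) :
    Filter.limsup
        (fun N : ℕ => ∑' n : ℕ, ENNReal.ofReal (p (n + 1)) * ENNReal.ofReal (p (n + 1 + N)))
        atTop = 0 ∧
      Tendsto
        (fun N : ℕ => ∑' n : ℕ, ENNReal.ofReal (p (n + 1)) * ENNReal.ofReal (p (n + 1 + N)))
        atTop (nhds 0) := by
  have htend : Tendsto
      (fun N : ℕ => ∑' n : ℕ, ENNReal.ofReal (p (n + 1)) * ENNReal.ofReal (p (n + 1 + N)))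
      atTop (nhds 0) := by
    rw [ENNReal.tendsto_atTop_zero]
    intro ε hε
    -- the bound `2 * ofReal (1/√K)` tends to `0` as `K → ∞`
    have hsqrt : Tendsto (fun K : ℕ => Real.sqrt K) atTop atTop := by
      rw [tendsto_atTop_atTop]
      intro b
      refine ⟨⌈b⌉₊ ^ 2, fun K hK => ?_⟩
      calc b ≤ (⌈b⌉₊ : ℝ) := Nat.le_ceil b
        _ = Real.sqrt (((⌈b⌉₊ : ℝ)) ^ 2) := by rw [Real.sqrt_sq (Nat.cast_nonneg _)]
        _ ≤ Real.sqrt K := by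
            apply Real.sqrt_le_sqrt
            have : ((⌈b⌉₊ ^ 2 : ℕ) : ℝ) ≤ (K : ℝ) := by exact_mod_cast hK
            push_cast at this ⊢
            linarith
    have h1 : Tendsto (fun K : ℕ => 1 / Real.sqrt K) atTop (nhds 0) := by
      simpa [one_div, Pi.inv_def] using hsqrt.inv_tendsto_atTop
    have hB : Tendsto (fun K : ℕ => 2 * ENNReal.ofReal (1 / Real.sqrt K)) atTop (nhds 0) := by
      have h2 : Tendsto (fun K : ℕ => ENNReal.ofReal (1 / Real.sqrt K)) atTop (nhds 0) := by
        simpa using ENNReal.tendsto_ofReal h1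
      simpa using ENNReal.Tendsto.const_mul (a := 2) h2 (Or.inr (by norm_num))
    obtain ⟨K, hKε, hK1⟩ :=
      ((hB.eventually_lt_const hε).and (eventually_ge_atTop 1)).exists
    refine ⟨3 ^ K + 2, fun N hN => ?_⟩
    have hN2 : 2 ≤ N := by have := Nat.one_le_pow K 3 (by norm_num); omega
    -- either the summand is identically zero, or there is a witness
    by_cases hall : ∀ n : ℕ, ENNReal.ofReal (p (n + 1)) * ENNReal.ofReal (p (n + 1 + N)) = 0
    · calc (∑' n : ℕ, ENNReal.ofReal (p (n + 1)) * ENNReal.ofReal (p (n + 1 + N)))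
          = ∑' _ : ℕ, (0 : ENNReal) := tsum_congr hall
        _ = 0 := by simp
        _ ≤ ε := zero_le
    · push_neg at hall
      obtain ⟨n₀, hn₀⟩ := hall
      have hn₀1 : p (n₀ + 1) ≠ 0 := by
        intro h; apply hn₀; simp [h]
      have hn₀2 : p (n₀ + 1 + N) ≠ 0 := by
        intro h; apply hn₀; simp [h]
      obtain ⟨j₀, hj₀, hmj₀, _⟩ := remark_rep hp (by omega) hn₀1
      obtain ⟨k, hk, hmk, _⟩ := remark_rep hp (by omega) hn₀2
      have hrel₀1 : 3 ^ j₀ + N ≤ 3 ^ k + 1 := by omega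
      have hrel₀2 : 3 ^ k ≤ 3 ^ j₀ + N + 1 := by omega
      -- the summand vanishes outside `{3^k - (N+1), 3^k - N}`
      have hsupp : ∀ n ∉ ({3 ^ k - (N + 1), 3 ^ k - N} : Finset ℕ),
          ENNReal.ofReal (p (n + 1)) * ENNReal.ofReal (p (n + 1 + N)) = 0 := by
        intro n hns
        by_contra hterm
        have h1 : p (n + 1) ≠ 0 := by intro h; apply hterm; simp [h]
        have h2 : p (n + 1 + N) ≠ 0 := by intro h; apply hterm; simp [h]
        obtain ⟨j, hj, hmj, _⟩ := remark_rep hp (by omega) h1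
        obtain ⟨k', hk', hmk', _⟩ := remark_rep hp (by omega) h2
        have hrel1 : 3 ^ j + N ≤ 3 ^ k' + 1 := by omega
        have hrel2 : 3 ^ k' ≤ 3 ^ j + N + 1 := by omega
        have hkk : k' = k := remark_pow_uniq hj hj₀ hN2 hrel1 hrel2 hrel₀1 hrel₀2
        subst hkk
        apply hns
        simp only [Finset.mem_insert, Finset.mem_singleton]
        rcases hmk' with h' | h' <;> omega
      rw [tsum_eq_sum hsupp]
      have hle : ∀ n ∈ ({3 ^ k - (N + 1), 3 ^ k - N} : Finset ℕ),
          ENNReal.ofReal (p (n + 1)) * ENNReal.ofReal (p (n + 1 + N))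
            ≤ ENNReal.ofReal (1 / Real.sqrt K) := by
        intro n _
        calc ENNReal.ofReal (p (n + 1)) * ENNReal.ofReal (p (n + 1 + N))
            ≤ ENNReal.ofReal 1 * ENNReal.ofReal (1 / Real.sqrt K) := by
              exact mul_le_mul' (ENNReal.ofReal_le_ofReal (remark_le_one hp (by omega)))
                (ENNReal.ofReal_le_ofReal (remark_bound hp hK1 (by omega)))
          _ = ENNReal.ofReal (1 / Real.sqrt K) := by simp
      calc (∑ n ∈ ({3 ^ k - (N + 1), 3 ^ k - N} : Finset ℕ),
            ENNReal.ofReal (p (n + 1)) * ENNReal.ofReal (p (n + 1 + N)))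
          ≤ ({3 ^ k - (N + 1), 3 ^ k - N} : Finset ℕ).card •
              ENNReal.ofReal (1 / Real.sqrt K) :=
            Finset.sum_le_card_nsmul _ _ _ hle
        _ ≤ 2 * ENNReal.ofReal (1 / Real.sqrt K) := by
            rw [nsmul_eq_mul]
            gcongr
            exact_mod_cast (Finset.card_insert_le _ _).trans (by simp)
        _ ≤ ε := le_of_lt hKε
  exact ⟨htend.limsup_eq, htend⟩
end
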